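/- arXiv:0801.3624 — 5 statements merged into one kernel-verified Lean document; each statement's English description precedes it below -/
import Mathlib

section
/- (Iterated Cauchy–Schwarz / BNS step.) Let k ≥ 2, ℓ, m ≥ 1 be integers, n = ℓ^{k−1}m, f : {0,1}^m → {−1,1}, μ a probability distribution on {0,1}^m, and λ the probability distribution on {0,1}^n × ([ℓ]^m)^{k−1} given by λ(x, S^1,…,S^{k−1}) = μ(x ← S^1,…,S^{k−1})/(ℓ^{m(k−1)} 2^{n−m}). Then for every cylinder intersection φ on the k-fold product {0,1}^n × [ℓ]^m × ⋯ × [ℓ]^m, (disc^φ_{k,λ}(F^f_k))^{2^{k−1}} ≤ 2^{2^{k−1}m} · E[H^f_k(S^1_0, S^1_1, …, S^{k−1}_0, S^{k−1}_1)], where the expectation is over S^1_0, S^1_1, …, S^{k−1}_0, S^{k−1}_1 chosen independently and uniformly at random from [ℓ]^m. -/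
open scoped BigOperators

/-- `x ← S^1,…,S^{K}`: with `x ∈ {0,1}^n` (`n = ℓ^K·m`) viewed as `m` blocks, each a
`K`-dimensional array of side `ℓ`, the `α`-th bit of the result is
`x[α][S^1[α],…,S^K[α]]`. -/
def mask {K ℓ m : ℕ} (x : Fin m → (Fin K → Fin ℓ) → Bool)
    (S : Fin K → Fin m → Fin ℓ) : Fin m → Bool :=
  fun α => x α (fun i => S i α)

/-- The masked function `F^f_k (x, S^1,…,S^{k-1}) = f(x ← S^1,…,S^{k-1})`. -/
def Ffun {K ℓ m : ℕ} (f : (Fin m → Bool) → ℝ)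
    (p : (Fin m → (Fin K → Fin ℓ) → Bool) × (Fin K → Fin m → Fin ℓ)) : ℝ :=
  f (mask p.1 p.2)

/-- A probability distribution on a finite set. -/
def IsProbDist {D : Type*} [Fintype D] (μ : D → ℝ) : Prop :=
  (∀ x, 0 ≤ μ x) ∧ ∑ x, μ x = 1

/-- The distribution `λ(x,S^1,…,S^{k-1}) = μ(x ← S^1,…,S^{k-1}) / (ℓ^{m(k-1)} 2^{n-m})`. -/
noncomputable def lamDist (k ℓ m n : ℕ) (μ : (Fin m → Bool) → ℝ)
    (p : (Fin m → (Fin (k - 1) → Fin ℓ) → Bool) × (Fin (k - 1) → Fin m → Fin ℓ)) : ℝ :=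
  μ (mask p.1 p.2) / ((ℓ : ℝ) ^ (m * (k - 1)) * 2 ^ (n - m))

/-- A cylinder intersection on the `k`-party domain `{0,1}^n × ([ℓ]^m)^{k-1}`
(one player holds `x`, and one player holds each `S^i`): a conjunction of a cylinder
not depending on `x` and, for each `i`, a cylinder not depending on `S^i`. -/
def IsCylinderIntersection {X V : Type*} {K : ℕ}
    (φ : X × (Fin K → V) → Bool) : Prop :=
  ∃ (ψ₀ : X × (Fin K → V) → Bool) (ψ : Fin K → X × (Fin K → V) → Bool),
    (∀ x x' S, ψ₀ (x, S) = ψ₀ (x', S)) ∧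
    (∀ i x S S', (∀ j, j ≠ i → S j = S' j) → ψ i (x, S) = ψ i (x, S')) ∧
    (∀ p, φ p = (ψ₀ p && decide (∀ i, ψ i p = true)))

/-- Interpret a boolean as the real `0` or `1`. -/
noncomputable def bval (b : Bool) : ℝ := if b then 1 else 0

/-- `disc^φ_{k,λ}(F) = |E_{y∼λ}[F(y)φ(y)]|`. -/
noncomputable def discPhi {D : Type*} [Fintype D] (lam : D → ℝ) (F : D → ℝ)
    (φ : D → Bool) : ℝ :=
  |∑ y, lam y * F y * bval (φ y)|

/-- `disc_{k,λ}(F)`: the supremum of `disc^φ_{k,λ}(F)` over cylinder intersections `φ`. -/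
noncomputable def disc {X V : Type*} [Fintype X] [Fintype V] {K : ℕ}
    (lam : X × (Fin K → V) → ℝ) (F : X × (Fin K → V) → ℝ) : ℝ :=
  sSup { t | ∃ φ, IsCylinderIntersection φ ∧ t = discPhi lam F φ }

/-- The character `χ_S(x) = (-1)^{Σ_{i∈S} x_i}`. -/
noncomputable def chiChar {m : ℕ} (S : Finset (Fin m)) (z : Fin m → Bool) : ℝ :=
  ∏ i ∈ S, (if z i then (-1 : ℝ) else 1)

/-- `f` is `(μ,d)`-orthogonal: `E_{x∼μ}[f(x)χ_S(x)] = 0` for every `S` with `|S| < d`. -/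
def Orthogonal {m : ℕ} (μ : (Fin m → Bool) → ℝ) (d : ℕ) (f : (Fin m → Bool) → ℝ) : Prop :=
  ∀ S : Finset (Fin m), S.card < d → ∑ z, μ z * f z * chiChar S z = 0

/-- `H^f_k(S^1_0,S^1_1,…,S^{k-1}_0,S^{k-1}_1)`: the absolute value of the expectation,
over `x` uniform on `{0,1}^n` (`n = ℓ^{k-1}m`), of
`∏_{u ∈ {0,1}^{k-1}} f(x ← S^1_{u_1},…,S^{k-1}_{u_{k-1}}) μ(x ← S^1_{u_1},…,S^{k-1}_{u_{k-1}})`. -/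
noncomputable def Hfun (k ℓ m : ℕ) (f μ : (Fin m → Bool) → ℝ)
    (S0 S1 : Fin (k - 1) → Fin m → Fin ℓ) : ℝ :=
  |(∑ x : Fin m → (Fin (k - 1) → Fin ℓ) → Bool,
      ∏ u : Fin (k - 1) → Bool,
        f (mask x (fun i => if u i then S1 i else S0 i)) *
          μ (mask x (fun i => if u i then S1 i else S0 i))) /
    (2 : ℝ) ^ (ℓ ^ (k - 1) * m)|

lemma bval_nonneg (b : Bool) : 0 ≤ bval b := by unfold bval; split <;> norm_num
lemma bval_le_one (b : Bool) : bval b ≤ 1 := by unfold bval; split <;> norm_num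
lemma bval_sq_le_one (b : Bool) : bval b ^ 2 ≤ 1 := by unfold bval; split <;> norm_num
lemma bval_and (a b : Bool) : bval (a && b) = bval a * bval b := by
  cases a <;> cases b <;> simp [bval]

lemma sum_consEquiv {V : Type*} [Fintype V] {K : ℕ} {M : Type*} [AddCommMonoid M]
    (g : (Fin (K+1) → V) → M) :
    ∑ S : Fin (K+1) → V, g S = ∑ s : V, ∑ T : Fin K → V, g (Fin.cons s T) := by
  rw [← Equiv.sum_comp (Fin.consEquiv fun _ => V) g, Fintype.sum_prod_type]
  rfl

lemma cons_if {V : Type*} {K : ℕ} (s0 s1 : V) (T0 T1 : Fin K → V) (b : Bool) (u : Fin K → Bool) :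
    (fun i => if (Fin.cons b u : Fin (K+1) → Bool) i then (Fin.cons s1 T1 : Fin (K+1) → V) i
        else (Fin.cons s0 T0 : Fin (K+1) → V) i)
      = (Fin.cons (if b then s1 else s0) (fun j => if u j then T1 j else T0 j) : Fin (K+1) → V) := by
  funext i
  refine Fin.cases ?_ ?_ i <;> simp

section Core
variable {X V : Type*} [Fintype X] [Fintype V]

noncomputable def ASum {K : ℕ} (F : X → (Fin K → V) → ℝ) (χ₀ : (Fin K → V) → Bool)
    (χ : Fin K → X → (Fin K → V) → Bool) : ℝ :=
  ∑ x, ∑ S, F x S * bval (χ₀ S) * ∏ i, bval (χ i x S)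

noncomputable def TSum {K : ℕ} (F : X → (Fin K → V) → ℝ) : ℝ :=
  ∑ S0 : Fin K → V, ∑ S1 : Fin K → V,
    |∑ x, ∏ u : Fin K → Bool, F x fun i => if u i then S1 i else S0 i|

lemma TSum_nonneg {K : ℕ} (F : X → (Fin K → V) → ℝ) : 0 ≤ TSum F := by
  refine Finset.sum_nonneg fun S0 _ => Finset.sum_nonneg fun S1 _ => abs_nonneg _

noncomputable def dblF {K : ℕ} (F : X → (Fin (K+1) → V) → ℝ) (s0 s1 : V) :
    X → (Fin K → V) → ℝ :=
  fun x T => F x (Fin.cons s0 T) * F x (Fin.cons s1 T)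

def dblChi0 {K : ℕ} (χ₀ : (Fin (K+1) → V) → Bool) (s0 s1 : V) : (Fin K → V) → Bool :=
  fun T => χ₀ (Fin.cons s0 T) && χ₀ (Fin.cons s1 T)

def dblChi {K : ℕ} (χ : Fin (K+1) → X → (Fin (K+1) → V) → Bool) (s0 s1 : V) :
    Fin K → X → (Fin K → V) → Bool :=
  fun j x T => χ j.succ x (Fin.cons s0 T) && χ j.succ x (Fin.cons s1 T)

noncomputable def Gfun {K : ℕ} (F : X → (Fin (K+1) → V) → ℝ) (χ₀ : (Fin (K+1) → V) → Bool)
    (χ : Fin (K+1) → X → (Fin (K+1) → V) → Bool) : X → (Fin K → V) → ℝ :=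
  fun x T => ∑ s : V, F x (Fin.cons s T) * bval (χ₀ (Fin.cons s T)) *
    ∏ j : Fin K, bval (χ j.succ x (Fin.cons s T))

lemma prod_dbl {K : ℕ} (F : X → (Fin (K+1) → V) → ℝ) (s0 s1 : V) (T0 T1 : Fin K → V) (x : X) :
    (∏ w : Fin (K+1) → Bool, F x fun i => if w i then (Fin.cons s1 T1 : Fin (K+1) → V) i else (Fin.cons s0 T0 : Fin (K+1) → V) i)
      = ∏ u : Fin K → Bool, dblF F s0 s1 x (fun i => if u i then T1 i else T0 i) := by
  rw [← Equiv.prod_comp (Fin.consEquiv fun _ => Bool)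
      (fun w => F x fun i => if w i then (Fin.cons s1 T1 : Fin (K+1) → V) i else (Fin.cons s0 T0 : Fin (K+1) → V) i),
    Fintype.prod_prod_type]
  have h : ∀ (b : Bool) (u : Fin K → Bool),
      (F x fun i => if (Fin.cons b u : Fin (K+1) → Bool) i then (Fin.cons s1 T1 : Fin (K+1) → V) i
          else (Fin.cons s0 T0 : Fin (K+1) → V) i)
        = F x (Fin.cons (if b then s1 else s0) fun j => if u j then T1 j else T0 j) := by
    intro b u
    congr 1
    exact cons_if s0 s1 T0 T1 b u
  calc (∏ b : Bool, ∏ u : Fin K → Bool,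
          F x fun i => if ((Fin.consEquiv fun _ => Bool) (b, u)) i then (Fin.cons s1 T1 : Fin (K+1) → V) i
            else (Fin.cons s0 T0 : Fin (K+1) → V) i)
      = ∏ b : Bool, ∏ u : Fin K → Bool,
          F x (Fin.cons (if b then s1 else s0) fun j => if u j then T1 j else T0 j) := by
        refine Finset.prod_congr rfl fun b _ => Finset.prod_congr rfl fun u _ => h b u
    _ = ∏ u : Fin K → Bool, dblF F s0 s1 x (fun i => if u i then T1 i else T0 i) := by
        rw [Fintype.prod_bool, ← Finset.prod_mul_distrib]
        refine Finset.prod_congr rfl fun u _ => ?_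
        simp [dblF, mul_comm]

lemma TSum_dbl {K : ℕ} (F : X → (Fin (K+1) → V) → ℝ) :
    ∑ s0 : V, ∑ s1 : V, TSum (dblF F s0 s1) = TSum F := by
  show _ = ∑ S0 : Fin (K+1) → V, ∑ S1 : Fin (K+1) → V,
    |∑ x, ∏ u : Fin (K+1) → Bool, F x fun i => if u i then S1 i else S0 i|
  rw [sum_consEquiv (fun S0 => ∑ S1 : Fin (K+1) → V,
      |∑ x, ∏ u : Fin (K+1) → Bool, F x fun i => if u i then S1 i else S0 i|)]
  refine Finset.sum_congr rfl fun s0 _ => ?_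
  have step : ∀ T0 : Fin K → V,
      (∑ S1 : Fin (K+1) → V, |∑ x, ∏ u : Fin (K+1) → Bool,
          F x fun i => if u i then S1 i else (Fin.cons s0 T0 : Fin (K+1) → V) i|)
        = ∑ s1 : V, ∑ T1 : Fin K → V,
            |∑ x, ∏ u : Fin K → Bool, dblF F s0 s1 x fun i => if u i then T1 i else T0 i| := by
    intro T0
    rw [sum_consEquiv (fun S1 => |∑ x, ∏ u : Fin (K+1) → Bool,
        F x fun i => if u i then S1 i else (Fin.cons s0 T0 : Fin (K+1) → V) i|)]
    refine Finset.sum_congr rfl fun s1 _ => Finset.sum_congr rfl fun T1 _ => ?_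
    congr 1
    exact Finset.sum_congr rfl fun x _ => prod_dbl F s0 s1 T0 T1 x
  calc ∑ s1 : V, TSum (dblF F s0 s1)
      = ∑ s1 : V, ∑ T0 : Fin K → V, ∑ T1 : Fin K → V,
          |∑ x, ∏ u : Fin K → Bool, dblF F s0 s1 x fun i => if u i then T1 i else T0 i| := rfl
    _ = ∑ T0 : Fin K → V, ∑ s1 : V, ∑ T1 : Fin K → V,
          |∑ x, ∏ u : Fin K → Bool, dblF F s0 s1 x fun i => if u i then T1 i else T0 i| :=
        Finset.sum_comm
    _ = ∑ T0 : Fin K → V, ∑ S1 : Fin (K+1) → V,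
          |∑ x, ∏ u : Fin (K+1) → Bool, F x fun i => if u i then S1 i else (Fin.cons s0 T0 : Fin (K+1) → V) i| :=
        Finset.sum_congr rfl fun T0 _ => (step T0).symm

lemma sum_swap4 {A B C D M : Type*} [Fintype A] [Fintype B] [Fintype C] [Fintype D]
    [AddCommMonoid M] (f : A → B → C → D → M) :
    ∑ a, ∑ b, ∑ c, ∑ d, f a b c d = ∑ c, ∑ d, ∑ a, ∑ b, f a b c d :=
  calc ∑ a, ∑ b, ∑ c, ∑ d, f a b c d
      = ∑ a, ∑ c, ∑ b, ∑ d, f a b c d :=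
        Finset.sum_congr rfl fun a _ => Finset.sum_comm
    _ = ∑ c, ∑ a, ∑ b, ∑ d, f a b c d := Finset.sum_comm
    _ = ∑ c, ∑ a, ∑ d, ∑ b, f a b c d :=
        Finset.sum_congr rfl fun c _ => Finset.sum_congr rfl fun a _ => Finset.sum_comm
    _ = ∑ c, ∑ d, ∑ a, ∑ b, f a b c d :=
        Finset.sum_congr rfl fun c _ => Finset.sum_comm

lemma Gsq_expand {K : ℕ} (F : X → (Fin (K+1) → V) → ℝ) (χ₀ : (Fin (K+1) → V) → Bool)
    (χ : Fin (K+1) → X → (Fin (K+1) → V) → Bool) :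
    ∑ p : X × (Fin K → V), (Gfun F χ₀ χ p.1 p.2)^2
      = ∑ s0 : V, ∑ s1 : V, ASum (dblF F s0 s1) (dblChi0 χ₀ s0 s1) (dblChi χ s0 s1) := by
  have h1 : ∀ (x : X) (T : Fin K → V), (Gfun F χ₀ χ x T)^2
      = ∑ s0 : V, ∑ s1 : V, dblF F s0 s1 x T * bval (dblChi0 χ₀ s0 s1 T) *
          ∏ j, bval (dblChi χ s0 s1 j x T) := by
    intro x T
    simp only [Gfun]
    rw [pow_two, Finset.sum_mul_sum]
    refine Finset.sum_congr rfl fun s0 _ => Finset.sum_congr rfl fun s1 _ => ?_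
    simp only [dblF, dblChi0, dblChi, bval_and, Finset.prod_mul_distrib]
    ring
  rw [Fintype.sum_prod_type]
  simp only [h1]
  rw [sum_swap4 (fun x T s0 s1 => dblF F s0 s1 x T * bval (dblChi0 χ₀ s0 s1 T) *
    ∏ j, bval (dblChi χ s0 s1 j x T))]
  rfl

lemma const_id (Mr Nr T : ℝ) (K : ℕ) :
    Mr^2 * (Nr * Mr^K)^(2^K) * (Mr*Mr)^(2^K - 1) * (Nr^(2^K-1) * Mr^(K*2^K) * T)
      = Nr^(2^(K+1) - 1) * Mr^((K+1)*2^(K+1)) * T := by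
  obtain ⟨e, he⟩ : ∃ e, 2^K = e + 1 := ⟨2^K - 1, (Nat.sub_add_cancel Nat.one_le_two_pow).symm⟩
  have h1 : 2^K - 1 = e := by omega
  have h2 : 2^(K+1) - 1 = 2*e + 1 := by rw [pow_succ]; omega
  have h4 : 2^(K+1) = 2*e + 2 := by rw [pow_succ]; omega
  rw [h2, h1, h4, he]
  ring

lemma core [Nonempty V] : ∀ (K : ℕ) (F : X → (Fin K → V) → ℝ)
    (χ₀ : (Fin K → V) → Bool) (χ : Fin K → X → (Fin K → V) → Bool),
    (∀ i x S S', (∀ j, j ≠ i → S j = S' j) → χ i x S = χ i x S') →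
    (Fintype.card V : ℝ) ^ (2 * K) * |ASum F χ₀ χ| ^ 2 ^ K ≤
      (Fintype.card X : ℝ) ^ (2 ^ K - 1) * (Fintype.card V : ℝ) ^ (K * 2 ^ K) * TSum F := by
  intro K
  induction K with
  | zero =>
    intro F χ₀ χ hχ
    have hd : (fun i => if (default : Fin 0 → Bool) i then (default : Fin 0 → V) i
        else (default : Fin 0 → V) i) = (default : Fin 0 → V) := Subsingleton.elim _ _
    simp only [Nat.mul_zero, Nat.zero_mul, pow_zero, pow_one, one_mul, Nat.pow_zero, Nat.sub_self]
    rw [show ASum F χ₀ χ = ∑ x, ∑ S : Fin 0 → V, F x S * bval (χ₀ S) * ∏ i, bval (χ i x S)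
      from rfl]
    rw [show TSum F = ∑ S0 : Fin 0 → V, ∑ S1 : Fin 0 → V,
      |∑ x, ∏ u : Fin 0 → Bool, F x fun i => if u i then S1 i else S0 i| from rfl]
    rw [Fintype.sum_unique (fun S0 : Fin 0 → V => ∑ S1 : Fin 0 → V,
      |∑ x, ∏ u : Fin 0 → Bool, F x fun i => if u i then S1 i else S0 i|)]
    rw [Fintype.sum_unique (fun S1 : Fin 0 → V =>
      |∑ x, ∏ u : Fin 0 → Bool, F x fun i => if u i then S1 i else (default : Fin 0 → V) i|)]
    calc |∑ x, ∑ S : Fin 0 → V, F x S * bval (χ₀ S) * ∏ i, bval (χ i x S)|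
        = |(∑ x, F x default) * bval (χ₀ default)| := by
          congr 1
          calc ∑ x, ∑ S : Fin 0 → V, F x S * bval (χ₀ S) * ∏ i, bval (χ i x S)
              = ∑ x, F x default * bval (χ₀ default) := by
                refine Finset.sum_congr rfl fun x _ => ?_
                rw [Fintype.sum_unique
                  (fun S : Fin 0 → V => F x S * bval (χ₀ S) * ∏ i, bval (χ i x S))]
                simp
            _ = (∑ x, F x default) * bval (χ₀ default) := by rw [← Finset.sum_mul]
      _ ≤ |∑ x, F x default| := by
          rw [abs_mul, abs_of_nonneg (bval_nonneg _)]
          calc |∑ x, F x default| * bval (χ₀ default) ≤ |∑ x, F x default| * 1 :=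
                mul_le_mul_of_nonneg_left (bval_le_one _) (abs_nonneg _)
            _ = |∑ x, F x default| := mul_one _
      _ = |∑ x, ∏ u : Fin 0 → Bool, F x fun i => if u i then (default : Fin 0 → V) i
            else (default : Fin 0 → V) i| := by
          congr 1
          refine Finset.sum_congr rfl fun x _ => ?_
          rw [Fintype.prod_unique (fun u : Fin 0 → Bool => F x fun i => if u i
            then (default : Fin 0 → V) i else (default : Fin 0 → V) i)]
          exact congrArg (F x) (Subsingleton.elim _ _)
  | succ K IH =>
    intro F χ₀ χ hχ
    obtain ⟨v0⟩ := (inferInstance : Nonempty V)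
    have hM0 : (0:ℝ) < (Fintype.card V : ℝ) := by exact_mod_cast Fintype.card_pos
    have hN0 : (0:ℝ) ≤ (Fintype.card X : ℝ) := Nat.cast_nonneg _
    -- A-split
    have hA : ASum F χ₀ χ
        = ∑ p : X × (Fin K → V), bval (χ 0 p.1 (Fin.cons v0 p.2)) * Gfun F χ₀ χ p.1 p.2 := by
      rw [ASum, Fintype.sum_prod_type]
      refine Finset.sum_congr rfl fun x _ => ?_
      rw [sum_consEquiv (fun S => F x S * bval (χ₀ S) * ∏ i, bval (χ i x S)), Finset.sum_comm]
      refine Finset.sum_congr rfl fun T _ => ?_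
      rw [Gfun]
      rw [Finset.mul_sum]
      refine Finset.sum_congr rfl fun s _ => ?_
      rw [Fin.prod_univ_succ]
      have h0 : χ 0 x (Fin.cons s T) = χ 0 x (Fin.cons v0 T) := by
        refine hχ 0 x _ _ fun j hj => ?_
        obtain ⟨j', rfl⟩ := Fin.eq_succ_of_ne_zero hj
        simp
      rw [h0]
      ring
    -- Cauchy-Schwarz
    have hGnn : (0:ℝ) ≤ ∑ p : X × (Fin K → V), (Gfun F χ₀ χ p.1 p.2)^2 :=
      Finset.sum_nonneg fun p _ => sq_nonneg _
    have hcs : (ASum F χ₀ χ)^2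
        ≤ ((Fintype.card X : ℝ) * (Fintype.card V : ℝ) ^ K) *
          ∑ p : X × (Fin K → V), (Gfun F χ₀ χ p.1 p.2)^2 := by
      rw [hA]
      calc (∑ p : X × (Fin K → V), bval (χ 0 p.1 (Fin.cons v0 p.2)) * Gfun F χ₀ χ p.1 p.2)^2
          ≤ (∑ p : X × (Fin K → V), bval (χ 0 p.1 (Fin.cons v0 p.2))^2) *
            (∑ p : X × (Fin K → V), (Gfun F χ₀ χ p.1 p.2)^2) :=
            Finset.sum_mul_sq_le_sq_mul_sq _ _ _
        _ ≤ ((Fintype.card X : ℝ) * (Fintype.card V : ℝ) ^ K) *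
            ∑ p : X × (Fin K → V), (Gfun F χ₀ χ p.1 p.2)^2 := by
            refine mul_le_mul_of_nonneg_right ?_ hGnn
            calc ∑ p : X × (Fin K → V), bval (χ 0 p.1 (Fin.cons v0 p.2))^2
                ≤ ∑ _p : X × (Fin K → V), (1:ℝ) :=
                  Finset.sum_le_sum fun p _ => bval_sq_le_one _
              _ = ((Fintype.card X : ℝ) * (Fintype.card V : ℝ) ^ K) := by
                  rw [Finset.sum_const, Finset.card_univ, Fintype.card_prod, Fintype.card_fun,
                    Fintype.card_fin]
                  push_cast
                  ring
    -- cylinder property of dblChi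
    have hχ' : ∀ s0 s1 : V, ∀ (j : Fin K) (x : X) (T T' : Fin K → V),
        (∀ j', j' ≠ j → T j' = T' j') → dblChi χ s0 s1 j x T = dblChi χ s0 s1 j x T' := by
      intro s0 s1 j x T T' hTT
      have ha : ∀ s : V, χ j.succ x (Fin.cons s T) = χ j.succ x (Fin.cons s T') := by
        intro s
        refine hχ j.succ x _ _ fun i hi => ?_
        rcases Fin.eq_zero_or_eq_succ i with h | ⟨i', rfl⟩
        · subst h; simp
        · have : i' ≠ j := fun h => hi (by rw [h])
          simp [hTT i' this]
      simp only [dblChi, ha s0, ha s1]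
    -- IH for each pair
    have hIH : ∀ s0 s1 : V,
        (Fintype.card V : ℝ) ^ (2 * K) *
          |ASum (dblF F s0 s1) (dblChi0 χ₀ s0 s1) (dblChi χ s0 s1)| ^ 2 ^ K ≤
        (Fintype.card X : ℝ) ^ (2 ^ K - 1) * (Fintype.card V : ℝ) ^ (K * 2 ^ K) *
          TSum (dblF F s0 s1) :=
      fun s0 s1 => IH _ _ _ (hχ' s0 s1)
    -- Jensen
    have hBnn : (0:ℝ) ≤ ∑ s0 : V, ∑ s1 : V,
        ASum (dblF F s0 s1) (dblChi0 χ₀ s0 s1) (dblChi χ s0 s1) := by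
      rw [← Gsq_expand]; exact hGnn
    have he : 2 ^ K - 1 + 1 = 2 ^ K := Nat.sub_add_cancel Nat.one_le_two_pow
    have hJen : (∑ s0 : V, ∑ s1 : V, ASum (dblF F s0 s1) (dblChi0 χ₀ s0 s1) (dblChi χ s0 s1)) ^ 2 ^ K
        ≤ ((Fintype.card V : ℝ) * (Fintype.card V : ℝ)) ^ (2 ^ K - 1) *
          ∑ s0 : V, ∑ s1 : V,
            |ASum (dblF F s0 s1) (dblChi0 χ₀ s0 s1) (dblChi χ s0 s1)| ^ 2 ^ K := by
      have h1 : (∑ s0 : V, ∑ s1 : V, ASum (dblF F s0 s1) (dblChi0 χ₀ s0 s1) (dblChi χ s0 s1))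
          ≤ ∑ q : V × V, |ASum (dblF F q.1 q.2) (dblChi0 χ₀ q.1 q.2) (dblChi χ q.1 q.2)| := by
        rw [Fintype.sum_prod_type]
        exact Finset.sum_le_sum fun s0 _ => Finset.sum_le_sum fun s1 _ => le_abs_self _
      have h2 := pow_le_pow_left₀ hBnn h1 (2 ^ K)
      have h4 := pow_sum_le_card_mul_sum_pow (s := (Finset.univ : Finset (V × V)))
        (f := fun q => |ASum (dblF F q.1 q.2) (dblChi0 χ₀ q.1 q.2) (dblChi χ q.1 q.2)|)
        (fun q _ => abs_nonneg _) (2 ^ K - 1)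
      rw [he] at h4
      refine le_trans h2 (le_trans h4 (le_of_eq ?_))
      rw [Finset.card_univ, Fintype.card_prod, Fintype.sum_prod_type]
      push_cast
      ring
    -- sum the IH over (s0, s1)
    have hPnn : (0:ℝ) ≤ ∑ s0 : V, ∑ s1 : V,
        |ASum (dblF F s0 s1) (dblChi0 χ₀ s0 s1) (dblChi χ s0 s1)| ^ 2 ^ K :=
      Finset.sum_nonneg fun _ _ => Finset.sum_nonneg fun _ _ => pow_nonneg (abs_nonneg _) _
    have hsumIH : (Fintype.card V : ℝ) ^ (2*K) * ∑ s0 : V, ∑ s1 : V,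
        |ASum (dblF F s0 s1) (dblChi0 χ₀ s0 s1) (dblChi χ s0 s1)| ^ 2 ^ K
        ≤ (Fintype.card X : ℝ) ^ (2 ^ K - 1) * (Fintype.card V : ℝ) ^ (K * 2 ^ K) * TSum F := by
      calc (Fintype.card V : ℝ) ^ (2*K) * ∑ s0 : V, ∑ s1 : V,
          |ASum (dblF F s0 s1) (dblChi0 χ₀ s0 s1) (dblChi χ s0 s1)| ^ 2 ^ K
          = ∑ s0 : V, ∑ s1 : V, (Fintype.card V : ℝ) ^ (2*K) *
              |ASum (dblF F s0 s1) (dblChi0 χ₀ s0 s1) (dblChi χ s0 s1)| ^ 2 ^ K := by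
            simp_rw [Finset.mul_sum]
        _ ≤ ∑ s0 : V, ∑ s1 : V, (Fintype.card X : ℝ) ^ (2 ^ K - 1) *
              (Fintype.card V : ℝ) ^ (K * 2 ^ K) * TSum (dblF F s0 s1) :=
            Finset.sum_le_sum fun s0 _ => Finset.sum_le_sum fun s1 _ => hIH s0 s1
        _ = (Fintype.card X : ℝ) ^ (2 ^ K - 1) * (Fintype.card V : ℝ) ^ (K * 2 ^ K) * TSum F := by
            rw [← TSum_dbl F]
            simp_rw [Finset.mul_sum]
    -- assemble
    calc (Fintype.card V : ℝ) ^ (2*(K+1)) * |ASum F χ₀ χ| ^ 2 ^ (K+1)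
        = (Fintype.card V : ℝ) ^ (2*(K+1)) * ((ASum F χ₀ χ)^2) ^ 2 ^ K := by
          rw [show (2:ℕ)^(K+1) = 2*2^K from by rw [pow_succ]; ring,
            pow_mul |ASum F χ₀ χ| 2 (2^K), sq_abs]
      _ ≤ (Fintype.card V : ℝ) ^ (2*(K+1)) * (((Fintype.card X : ℝ) *
            (Fintype.card V : ℝ)^K) * ∑ p : X × (Fin K → V), (Gfun F χ₀ χ p.1 p.2)^2) ^ 2 ^ K := by
          refine mul_le_mul_of_nonneg_left (pow_le_pow_left₀ (sq_nonneg _) hcs _) (by positivity)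
      _ = (Fintype.card V : ℝ) ^ (2*(K+1)) * ((Fintype.card X : ℝ) * (Fintype.card V : ℝ)^K) ^ 2 ^ K *
            (∑ s0 : V, ∑ s1 : V, ASum (dblF F s0 s1) (dblChi0 χ₀ s0 s1) (dblChi χ s0 s1)) ^ 2 ^ K := by
          rw [Gsq_expand, mul_pow]
          ring
      _ ≤ (Fintype.card V : ℝ) ^ (2*(K+1)) * ((Fintype.card X : ℝ) * (Fintype.card V : ℝ)^K) ^ 2 ^ K *
            (((Fintype.card V : ℝ) * (Fintype.card V : ℝ)) ^ (2 ^ K - 1) *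
              ∑ s0 : V, ∑ s1 : V,
                |ASum (dblF F s0 s1) (dblChi0 χ₀ s0 s1) (dblChi χ s0 s1)| ^ 2 ^ K) := by
          refine mul_le_mul_of_nonneg_left hJen (by positivity)
      _ = ((Fintype.card V : ℝ)^2 * ((Fintype.card X : ℝ) * (Fintype.card V : ℝ)^K) ^ 2 ^ K *
            ((Fintype.card V : ℝ) * (Fintype.card V : ℝ)) ^ (2 ^ K - 1)) *
            ((Fintype.card V : ℝ) ^ (2*K) * ∑ s0 : V, ∑ s1 : V,
                |ASum (dblF F s0 s1) (dblChi0 χ₀ s0 s1) (dblChi χ s0 s1)| ^ 2 ^ K) := by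
          ring
      _ ≤ ((Fintype.card V : ℝ)^2 * ((Fintype.card X : ℝ) * (Fintype.card V : ℝ)^K) ^ 2 ^ K *
            ((Fintype.card V : ℝ) * (Fintype.card V : ℝ)) ^ (2 ^ K - 1)) *
            ((Fintype.card X : ℝ) ^ (2 ^ K - 1) * (Fintype.card V : ℝ) ^ (K * 2 ^ K) * TSum F) := by
          refine mul_le_mul_of_nonneg_left hsumIH (by positivity)
      _ = (Fintype.card X : ℝ) ^ (2 ^ (K+1) - 1) * (Fintype.card V : ℝ) ^ ((K+1) * 2 ^ (K+1)) *
            TSum F := const_id _ _ _ K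

end Core

noncomputable def FB {k ℓ m : ℕ} (f μ : (Fin m → Bool) → ℝ)
    (x : Fin m → (Fin (k - 1) → Fin ℓ) → Bool) (S : Fin (k - 1) → Fin m → Fin ℓ) : ℝ :=
  f (mask x S) * μ (mask x S)

/-- Iterated Cauchy–Schwarz / BNS step: for every cylinder intersection `φ`,
`(disc^φ_{k,λ}(F^f_k))^{2^{k-1}} ≤ 2^{2^{k-1}m} · E[H^f_k(S^1_0,S^1_1,…,S^{k-1}_0,S^{k-1}_1)]`,
the expectation over the `2(k-1)` vectors chosen independently and uniformly in `[ℓ]^m`. -/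
theorem statement5 (k ℓ m : ℕ) (hk : 2 ≤ k) (hℓ : 1 ≤ ℓ) (hm : 1 ≤ m)
    (n : ℕ) (hn : n = ℓ ^ (k - 1) * m)
    (f : (Fin m → Bool) → ℝ) (hf : ∀ z, f z = 1 ∨ f z = -1)
    (μ : (Fin m → Bool) → ℝ) (hμ : IsProbDist μ)
    (φ : (Fin m → (Fin (k - 1) → Fin ℓ) → Bool) × (Fin (k - 1) → Fin m → Fin ℓ) → Bool)
    (hφ : IsCylinderIntersection φ) :
    (discPhi (lamDist k ℓ m n μ) (Ffun f) φ) ^ (2 ^ (k - 1)) ≤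
      (2 : ℝ) ^ (2 ^ (k - 1) * m) *
        ((∑ S0 : Fin (k - 1) → Fin m → Fin ℓ, ∑ S1 : Fin (k - 1) → Fin m → Fin ℓ,
            Hfun k ℓ m f μ S0 S1) / (ℓ : ℝ) ^ (2 * ((k - 1) * m))) := by
  classical
  obtain ⟨ψ₀, ψ, h0, hcyl, heq⟩ := hφ
  haveI : NeZero ℓ := ⟨by omega⟩
  have hl0 : (0:ℝ) < (ℓ:ℝ) := by exact_mod_cast (by omega : 0 < ℓ)
  have hnm : m ≤ n := by
    rw [hn]
    calc m = 1 * m := (one_mul m).symm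
      _ ≤ ℓ ^ (k-1) * m := Nat.mul_le_mul_right m (Nat.one_le_pow _ _ (by omega))
  have hC : (0:ℝ) < (ℓ : ℝ) ^ (m * (k - 1)) * 2 ^ (n - m) := by positivity
  -- the cylinder pieces, adapted to `core`'s format
  set χ₀ : (Fin (k-1) → Fin m → Fin ℓ) → Bool :=
    fun S => ψ₀ ((fun _ _ => false), S) with hχ₀def
  set χ : Fin (k-1) → (Fin m → (Fin (k-1) → Fin ℓ) → Bool) →
      (Fin (k-1) → Fin m → Fin ℓ) → Bool := fun i x S => ψ i (x, S) with hχdef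
  have hb : ∀ p, bval (φ p) = bval (ψ₀ p) * ∏ i, bval (ψ i p) := by
    intro p
    rw [heq p, bval_and]
    congr 1
    by_cases h : ∀ i, ψ i p = true
    · rw [Finset.prod_eq_one fun i _ => by rw [h i]; rfl]
      simp [bval, h]
    · obtain ⟨i, hi⟩ := not_forall.mp h
      have hfalse : ψ i p = false := by revert hi; cases ψ i p <;> simp
      rw [Finset.prod_eq_zero (Finset.mem_univ i) (by rw [hfalse]; rfl)]
      simp [bval, h]
  -- disc as a normalized ASum
  have hdisc : discPhi (lamDist k ℓ m n μ) (Ffun f) φ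
      = |ASum (FB f μ) χ₀ χ| / ((ℓ : ℝ) ^ (m * (k - 1)) * 2 ^ (n - m)) := by
    rw [discPhi]
    have hsum : (∑ y, lamDist k ℓ m n μ y * Ffun f y * bval (φ y))
        = ASum (FB f μ) χ₀ χ / ((ℓ : ℝ) ^ (m * (k - 1)) * 2 ^ (n - m)) := by
      rw [ASum, Fintype.sum_prod_type, Finset.sum_div]
      refine Finset.sum_congr rfl fun x _ => ?_
      rw [Finset.sum_div]
      refine Finset.sum_congr rfl fun S _ => ?_
      rw [hb (x, S), lamDist, Ffun, FB]
      have h00 : ψ₀ (x, S) = χ₀ S := h0 x _ S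
      rw [h00]
      field_simp
      ring
    rw [hsum, abs_div, abs_of_pos hC]
  -- cardinalities
  have hcV : (Fintype.card (Fin m → Fin ℓ) : ℝ) = (ℓ:ℝ) ^ m := by
    rw [Fintype.card_fun]; push_cast; simp
  have hcXn : Fintype.card (Fin m → (Fin (k-1) → Fin ℓ) → Bool) = 2 ^ n := by
    simp only [Fintype.card_fun, Fintype.card_bool, Fintype.card_fin, ← pow_mul, hn]
  have hcX : (Fintype.card (Fin m → (Fin (k-1) → Fin ℓ) → Bool) : ℝ) = (2:ℝ) ^ n := by
    exact_mod_cast hcXn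
  -- the key inequality from `core`
  have key := core (X := Fin m → (Fin (k-1) → Fin ℓ) → Bool) (V := Fin m → Fin ℓ)
    (k-1) (FB f μ) χ₀ χ (fun i x S S' h => hcyl i x S S' h)
  -- TSum vs Hfun
  have hTS : TSum (FB (k := k) (ℓ := ℓ) f μ) = 2 ^ n *
      (∑ S0 : Fin (k - 1) → Fin m → Fin ℓ, ∑ S1 : Fin (k - 1) → Fin m → Fin ℓ,
        Hfun k ℓ m f μ S0 S1) := by
    rw [TSum, Finset.mul_sum]
    refine Finset.sum_congr rfl fun S0 _ => ?_
    rw [Finset.mul_sum]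
    refine Finset.sum_congr rfl fun S1 _ => ?_
    rw [Hfun, abs_div, abs_of_pos (show (0:ℝ) < 2 ^ (ℓ ^ (k-1) * m) by positivity), ← hn,
      mul_div_cancel₀ _ (show ((2:ℝ)) ^ n ≠ 0 by positivity)]
    rfl
  -- final computation
  rw [hdisc, div_pow,
    div_le_iff₀ (show (0:ℝ) < ((ℓ : ℝ) ^ (m * (k - 1)) * 2 ^ (n - m)) ^ 2 ^ (k-1) by positivity)]
  have hcancel : (0:ℝ) < (Fintype.card (Fin m → Fin ℓ) : ℝ) ^ (2*(k-1)) := by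
    have : (0:ℝ) < (Fintype.card (Fin m → Fin ℓ) : ℝ) := by exact_mod_cast Fintype.card_pos
    positivity
  rw [← mul_le_mul_iff_right₀ hcancel]
  refine key.trans (le_of_eq ?_)
  rw [hTS, hcV, hcX]
  obtain ⟨d, hd⟩ : ∃ d, n = d + m := ⟨n - m, by omega⟩
  obtain ⟨e, he⟩ : ∃ e, 2^(k-1) = e + 1 :=
    ⟨2^(k-1) - 1, (Nat.sub_add_cancel Nat.one_le_two_pow).symm⟩
  rw [show 2^(k-1) - 1 = e by omega]
  rw [hd, he, Nat.add_sub_cancel]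
  have hD0 : (ℓ:ℝ) ≠ 0 := ne_of_gt hl0
  field_simp
  ring
end

section
/- (Claim 2.) Let k ≥ 2, ℓ, m ≥ 1 be integers, n = ℓ^{k−1}m, f : {0,1}^m → {−1,1}, and μ a probability distribution on {0,1}^m. Then for all S^1_0, S^1_1, …, S^{k−1}_0, S^{k−1}_1 ∈ [ℓ]^m, H^f_k(S^1_0, S^1_1, …, S^{k−1}_0, S^{k−1}_1) ≤ 2^{(2^{k−1}−1)r} / 2^{2^{k−1}m}, where r_i = |{α ∈ [m] : S^i_0[α] = S^i_1[α]}| and r = r_1 + ⋯ + r_{k−1}. -/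
open scoped BigOperators

lemma count_constrained {A : Type*} [Fintype A] [DecidableEq A]
    (s : Finset A) (F : A → Bool) :
    ((Finset.univ.filter (fun g : A → Bool => ∀ a ∈ s, g a = F a)).card : ℕ)
      = 2 ^ (Fintype.card A - s.card) := by
  classical
  have h : Finset.univ.filter (fun g : A → Bool => ∀ a ∈ s, g a = F a)
      = Fintype.piFinset (fun a => if a ∈ s then {F a} else Finset.univ) := by
    ext g
    simp only [Finset.mem_filter, Finset.mem_univ, true_and, Fintype.mem_piFinset]
    constructor
    · intro h a
      by_cases ha : a ∈ s <;> simp [ha, h a]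
    · intro h a ha
      have := h a
      simpa [ha] using this
  rw [h, Fintype.card_piFinset]
  have h2 : ∀ a : A, (if a ∈ s then ({F a} : Finset Bool) else Finset.univ).card
      = if a ∈ s then 1 else 2 := by
    intro a; split <;> simp
  rw [Finset.prod_congr rfl (fun a _ => h2 a), Finset.prod_ite, Finset.prod_const,
    Finset.prod_const, one_pow, one_mul]
  congr 1
  have := Finset.card_filter_add_card_filter_not (s := (Finset.univ : Finset A))
    (p := fun a => a ∈ s)
  have hs : (Finset.univ.filter (fun a => a ∈ s)).card = s.card := by
    congr 1; simp
  have hu : (Finset.univ : Finset A).card = Fintype.card A := Finset.card_univ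
  omega

lemma pow_helper (K t : ℕ) : 2 ^ K ≤ 2 ^ (K - t) + (2 ^ K - 1) * t := by
  rcases Nat.eq_zero_or_pos t with h | h
  · simp [h]
  · have h1 : 1 ≤ 2 ^ (K - t) := Nat.one_le_two_pow
    have h3 : 1 ≤ 2 ^ K := Nat.one_le_two_pow
    have h2 : (2 ^ K - 1) * 1 ≤ (2 ^ K - 1) * t := Nat.mul_le_mul_left _ h
    omega

set_option maxHeartbeats 1000000 in
lemma per_alpha {K L : ℕ} (a b : Fin K → Fin L)
    (cl : (Fin K → Bool) → (Fin K → Fin L))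
    (hcl : ∀ u i, cl u i = if u i then b i else a i)
    (v : (Fin K → Bool) → Bool) :
    (Finset.univ.filter (fun g : (Fin K → Fin L) → Bool =>
        ∀ u : Fin K → Bool, g (cl u) = v u)).card
        * 2 ^ (2 ^ K)
      ≤ 2 ^ (L ^ K) * 2 ^ ((2 ^ K - 1) * (Finset.univ.filter (fun i => a i = b i)).card) := by
  classical
  set T : Finset (Fin K) := Finset.univ.filter (fun i => a i = b i) with hT
  set img : Finset (Fin K → Fin L) := Finset.univ.image cl with himg
  set F : (Fin K → Fin L) → Bool := fun d =>
    if h : d ∈ img then v (Finset.mem_image.mp h).choose else false with hF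
  have hsub : (Finset.univ.filter (fun g : (Fin K → Fin L) → Bool =>
        ∀ u : Fin K → Bool, g (cl u) = v u))
      ⊆ Finset.univ.filter (fun g => ∀ d ∈ img, g d = F d) := by
    intro g hg
    simp only [Finset.mem_filter, Finset.mem_univ, true_and] at hg ⊢
    intro d hd
    simp only [hF]
    rw [dif_pos hd]
    obtain ⟨-, hspec⟩ := (Finset.mem_image.mp hd).choose_spec
    have hgc := hg (Finset.mem_image.mp hd).choose
    rw [hspec] at hgc
    exact hgc
  have hcard1 : (Finset.univ.filter (fun g : (Fin K → Fin L) → Bool =>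
        ∀ u : Fin K → Bool, g (cl u) = v u)).card ≤ 2 ^ (L ^ K - img.card) := by
    calc _ ≤ (Finset.univ.filter (fun g : (Fin K → Fin L) → Bool => ∀ d ∈ img, g d = F d)).card :=
        Finset.card_le_card hsub
      _ = 2 ^ (Fintype.card (Fin K → Fin L) - img.card) := count_constrained img F
      _ = 2 ^ (L ^ K - img.card) := by
        rw [Fintype.card_fun]; simp
  have hinj : Set.InjOn cl (Finset.univ.filter (fun u : Fin K → Bool => ∀ i ∈ T, u i = false)) := by
    intro u hu u' hu' heq
    simp only [Finset.coe_filter, Set.mem_setOf_eq, Finset.mem_univ, true_and] at hu hu'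
    funext i
    by_cases hi : i ∈ T
    · rw [hu i hi, hu' i hi]
    · have hab : ¬ a i = b i := by
        simp only [hT, Finset.mem_filter, Finset.mem_univ, true_and] at hi; exact hi
      have := congrFun heq i
      rw [hcl, hcl] at this
      cases h1 : u i <;> cases h2 : u' i <;> simp [h1, h2] at this ⊢ <;> tauto
  have hWcard : (Finset.univ.filter (fun u : Fin K → Bool => ∀ i ∈ T, u i = false)).card
      = 2 ^ (K - T.card) := by
    have h := count_constrained (A := Fin K) T (fun _ => false)
    rw [Fintype.card_fin] at h
    convert h using 3
  have himgcard : 2 ^ (K - T.card) ≤ img.card := by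
    rw [← hWcard, ← Finset.card_image_of_injOn hinj]
    apply Finset.card_le_card
    intro d hd
    obtain ⟨u, -, hu⟩ := Finset.mem_image.mp hd
    exact Finset.mem_image.mpr ⟨u, Finset.mem_univ u, hu⟩
  have himgle : img.card ≤ L ^ K := by
    calc img.card ≤ (Finset.univ : Finset (Fin K → Fin L)).card :=
        Finset.card_le_card (Finset.subset_univ _)
      _ = L ^ K := by rw [Finset.card_univ, Fintype.card_fun]; simp
  clear hsub hF F
  clear_value T img
  have hkey : 2 ^ K ≤ img.card + (2 ^ K - 1) * T.card :=
    (pow_helper K T.card).trans (Nat.add_le_add_right himgcard _)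
  calc (Finset.univ.filter (fun g : (Fin K → Fin L) → Bool =>
        ∀ u : Fin K → Bool, g (cl u) = v u)).card * 2 ^ (2 ^ K)
      ≤ 2 ^ (L ^ K - img.card) * 2 ^ (2 ^ K) := Nat.mul_le_mul_right _ hcard1
    _ = 2 ^ (L ^ K - img.card + 2 ^ K) := (pow_add 2 _ _).symm
    _ ≤ 2 ^ (L ^ K + (2 ^ K - 1) * T.card) := by
        apply Nat.pow_le_pow_right (by norm_num)
        calc L ^ K - img.card + 2 ^ K
            ≤ L ^ K - img.card + img.card + (2 ^ K - 1) * T.card := by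
              rw [add_assoc]; exact Nat.add_le_add_left hkey _
          _ = L ^ K + (2 ^ K - 1) * T.card := by rw [Nat.sub_add_cancel himgle]
    _ = 2 ^ (L ^ K) * 2 ^ ((2 ^ K - 1) * T.card) := pow_add 2 _ _

/-- The fiber map `x ↦ (u ↦ x ← S^1_{u_1},…)`. -/
def Fw {k ℓ m : ℕ} (S0 S1 : Fin (k - 1) → Fin m → Fin ℓ)
    (x : Fin m → (Fin (k - 1) → Fin ℓ) → Bool) : (Fin (k - 1) → Bool) → Fin m → Bool :=
  fun u => mask x (fun i => if u i then S1 i else S0 i)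


/-- Claim 2: `H^f_k(S^1_0,…,S^{k-1}_1) ≤ 2^{(2^{k-1}-1)r} / 2^{2^{k-1}m}`, where
`r_i = |{α : S^i_0[α] = S^i_1[α]}|` and `r = r_1 + ⋯ + r_{k-1}`. -/
theorem statement6 (k ℓ m : ℕ) (hk : 2 ≤ k) (hℓ : 1 ≤ ℓ) (hm : 1 ≤ m)
    (n : ℕ) (hn : n = ℓ ^ (k - 1) * m)
    (f : (Fin m → Bool) → ℝ) (hf : ∀ z, f z = 1 ∨ f z = -1)
    (μ : (Fin m → Bool) → ℝ) (hμ : IsProbDist μ)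
    (S0 S1 : Fin (k - 1) → Fin m → Fin ℓ)
    (r : ℕ)
    (hr : r = ∑ i : Fin (k - 1),
      (Finset.univ.filter (fun α : Fin m => S0 i α = S1 i α)).card) :
    Hfun k ℓ m f μ S0 S1 ≤
      (2 : ℝ) ^ ((2 ^ (k - 1) - 1) * r) / (2 : ℝ) ^ (2 ^ (k - 1) * m) := by
  classical
  have hμ0 := hμ.1
  have hμ1 := hμ.2
  -- abbreviations for the relevant quantities
  have hone : ∑ w : (Fin (k - 1) → Bool) → Fin m → Bool, ∏ u : Fin (k - 1) → Bool, μ (w u) = 1 := by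
    have h := Finset.prod_univ_sum (fun _ : Fin (k - 1) → Bool => (Finset.univ : Finset (Fin m → Bool)))
      (fun _ z => μ z)
    rw [Fintype.piFinset_univ] at h
    rw [← h]
    simp [hμ1]
  -- counting the fibers
  have hcardprod : ∀ w : (Fin (k - 1) → Bool) → Fin m → Bool,
      (Finset.univ.filter (fun x => Fw S0 S1 x = w)).card
        = ∏ α : Fin m, (Finset.univ.filter
            (fun g : (Fin (k - 1) → Fin ℓ) → Bool =>
              ∀ u : Fin (k - 1) → Bool, g (fun i => if u i then S1 i α else S0 i α) = w u α)).card := by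
    intro w
    have hset : Finset.univ.filter (fun x : Fin m → (Fin (k - 1) → Fin ℓ) → Bool => Fw S0 S1 x = w)
        = Fintype.piFinset (fun α => Finset.univ.filter
            (fun g : (Fin (k - 1) → Fin ℓ) → Bool =>
              ∀ u : Fin (k - 1) → Bool, g (fun i => if u i then S1 i α else S0 i α) = w u α)) := by
      ext x
      simp only [Finset.mem_filter, Finset.mem_univ, true_and, Fintype.mem_piFinset,
        funext_iff, Fw, mask, ite_apply]
      exact forall_comm
    rw [hset, Fintype.card_piFinset]
  -- the per-fiber counting bound, as naturals
  have hNat : ∀ w : (Fin (k - 1) → Bool) → Fin m → Bool,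
      (Finset.univ.filter (fun x => Fw S0 S1 x = w)).card * 2 ^ (2 ^ (k - 1) * m)
        ≤ 2 ^ (ℓ ^ (k - 1) * m) * 2 ^ ((2 ^ (k - 1) - 1) * r) := by
    intro w
    rw [hcardprod w]
    have hswap : ∑ α : Fin m, (Finset.univ.filter (fun i : Fin (k - 1) => S0 i α = S1 i α)).card = r := by
      rw [hr]
      simp only [Finset.card_filter]
      exact Finset.sum_comm
    calc (∏ α : Fin m, (Finset.univ.filter
            (fun g : (Fin (k - 1) → Fin ℓ) → Bool =>
              ∀ u : Fin (k - 1) → Bool, g (fun i => if u i then S1 i α else S0 i α) = w u α)).card)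
          * 2 ^ (2 ^ (k - 1) * m)
        = ∏ α : Fin m, ((Finset.univ.filter
            (fun g : (Fin (k - 1) → Fin ℓ) → Bool =>
              ∀ u : Fin (k - 1) → Bool, g (fun i => if u i then S1 i α else S0 i α) = w u α)).card
            * 2 ^ (2 ^ (k - 1))) := by
          rw [Finset.prod_mul_distrib, Finset.prod_const, Finset.card_univ, Fintype.card_fin,
            ← pow_mul]
      _ ≤ ∏ α : Fin m, (2 ^ (ℓ ^ (k - 1)) * 2 ^ ((2 ^ (k - 1) - 1)
            * (Finset.univ.filter (fun i : Fin (k - 1) => S0 i α = S1 i α)).card)) := by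
          apply Finset.prod_le_prod'
          intro α _
          exact per_alpha (fun i => S0 i α) (fun i => S1 i α)
            (fun u i => if u i then S1 i α else S0 i α) (fun u i => rfl) (fun u => w u α)
      _ = 2 ^ (ℓ ^ (k - 1) * m) * 2 ^ ((2 ^ (k - 1) - 1) * r) := by
          rw [Finset.prod_mul_distrib, Finset.prod_const, Finset.card_univ, Fintype.card_fin,
            ← pow_mul, Finset.prod_pow_eq_pow_sum, ← Finset.mul_sum, hswap]
  -- the per-fiber counting bound, as reals
  have hRw : ∀ w : (Fin (k - 1) → Bool) → Fin m → Bool,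
      ((Finset.univ.filter (fun x => Fw S0 S1 x = w)).card : ℝ)
        ≤ 2 ^ (ℓ ^ (k - 1) * m) * 2 ^ ((2 ^ (k - 1) - 1) * r) / 2 ^ (2 ^ (k - 1) * m) := by
    intro w
    rw [le_div_iff₀ (by positivity)]
    exact_mod_cast hNat w
  -- Step 1: bound the numerator by dropping f and the signs
  have step1 : |∑ x : Fin m → (Fin (k - 1) → Fin ℓ) → Bool,
      ∏ u : Fin (k - 1) → Bool,
        f (mask x (fun i => if u i then S1 i else S0 i)) *
          μ (mask x (fun i => if u i then S1 i else S0 i))|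
      ≤ ∑ x : Fin m → (Fin (k - 1) → Fin ℓ) → Bool,
          ∏ u : Fin (k - 1) → Bool, μ (mask x (fun i => if u i then S1 i else S0 i)) := by
    refine (Finset.abs_sum_le_sum_abs _ _).trans ?_
    apply Finset.sum_le_sum
    intro x _
    rw [Finset.abs_prod]
    refine Finset.prod_le_prod (fun _ _ => abs_nonneg _) ?_
    intro u _
    rw [abs_mul]
    rcases hf (mask x (fun i => if u i then S1 i else S0 i)) with h | h <;>
      rw [h] <;> simp [abs_of_nonneg (hμ0 _)]
  -- Step 2: group the sum by fibers
  have step2 : (∑ x : Fin m → (Fin (k - 1) → Fin ℓ) → Bool,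
        ∏ u : Fin (k - 1) → Bool, μ (mask x (fun i => if u i then S1 i else S0 i)))
      = ∑ w : (Fin (k - 1) → Bool) → Fin m → Bool,
          ((Finset.univ.filter (fun x => Fw S0 S1 x = w)).card : ℝ) * ∏ u, μ (w u) := by
    rw [← Finset.sum_fiberwise Finset.univ (fun x => Fw S0 S1 x)
      (fun x => ∏ u : Fin (k - 1) → Bool, μ (mask x (fun i => if u i then S1 i else S0 i)))]
    apply Finset.sum_congr rfl
    intro w _
    calc ∑ x ∈ Finset.univ.filter (fun x => Fw S0 S1 x = w),
          ∏ u : Fin (k - 1) → Bool, μ (mask x (fun i => if u i then S1 i else S0 i))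
        = ∑ x ∈ Finset.univ.filter (fun x => Fw S0 S1 x = w),
            ∏ u : Fin (k - 1) → Bool, μ (w u) := by
          apply Finset.sum_congr rfl
          intro x hx
          simp only [Finset.mem_filter] at hx
          refine Finset.prod_congr rfl (fun u _ => ?_)
          rw [← hx.2]
          rfl
      _ = ((Finset.univ.filter (fun x => Fw S0 S1 x = w)).card : ℝ) * ∏ u, μ (w u) := by
          rw [Finset.sum_const, nsmul_eq_mul]
  -- Step 3: bound the fiberwise sum
  have step3 : (∑ w : (Fin (k - 1) → Bool) → Fin m → Bool,
        ((Finset.univ.filter (fun x => Fw S0 S1 x = w)).card : ℝ) * ∏ u, μ (w u))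
      ≤ 2 ^ (ℓ ^ (k - 1) * m) * 2 ^ ((2 ^ (k - 1) - 1) * r) / 2 ^ (2 ^ (k - 1) * m) := by
    calc (∑ w : (Fin (k - 1) → Bool) → Fin m → Bool,
          ((Finset.univ.filter (fun x => Fw S0 S1 x = w)).card : ℝ) * ∏ u, μ (w u))
        ≤ ∑ w : (Fin (k - 1) → Bool) → Fin m → Bool,
            (2 ^ (ℓ ^ (k - 1) * m) * 2 ^ ((2 ^ (k - 1) - 1) * r) / 2 ^ (2 ^ (k - 1) * m))
              * ∏ u, μ (w u) := by
          apply Finset.sum_le_sum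
          intro w _
          exact mul_le_mul_of_nonneg_right (hRw w)
            (Finset.prod_nonneg fun u _ => hμ0 _)
      _ = (2 ^ (ℓ ^ (k - 1) * m) * 2 ^ ((2 ^ (k - 1) - 1) * r) / 2 ^ (2 ^ (k - 1) * m))
            * ∑ w : (Fin (k - 1) → Bool) → Fin m → Bool, ∏ u, μ (w u) := by
          rw [Finset.mul_sum]
      _ = _ := by rw [hone, mul_one]
  -- assemble
  rw [Hfun, abs_div, abs_of_pos (by positivity : (0:ℝ) < (2:ℝ) ^ (ℓ ^ (k - 1) * m))]
  rw [div_le_div_iff₀ (by positivity) (by positivity)]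
  have hmain := (step1.trans (le_of_eq step2)).trans step3
  rw [le_div_iff₀ (by positivity)] at hmain
  calc |∑ x : Fin m → (Fin (k - 1) → Fin ℓ) → Bool,
      ∏ u : Fin (k - 1) → Bool,
        f (mask x (fun i => if u i then S1 i else S0 i)) *
          μ (mask x (fun i => if u i then S1 i else S0 i))| * (2:ℝ) ^ (2 ^ (k - 1) * m)
      ≤ 2 ^ (ℓ ^ (k - 1) * m) * 2 ^ ((2 ^ (k - 1) - 1) * r) := hmain
    _ = 2 ^ ((2 ^ (k - 1) - 1) * r) * 2 ^ (ℓ ^ (k - 1) * m) := by ring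
end

section
/- (Claim 1.) Let k ≥ 2, ℓ, m ≥ 1, d ≥ 1 be integers, n = ℓ^{k−1}m, μ a probability distribution on {0,1}^m, and f : {0,1}^m → {−1,1} a (μ,d)-orthogonal function. Then for all S^1_0, S^1_1, …, S^{k−1}_0, S^{k−1}_1 ∈ [ℓ]^m with r < d, H^f_k(S^1_0, S^1_1, …, S^{k−1}_0, S^{k−1}_1) = 0, where r_i = |{α ∈ [m] : S^i_0[α] = S^i_1[α]}| and r = r_1 + ⋯ + r_{k−1}. -/
open scoped BigOperators

section ClaimOneAux
open Finset

private lemma sum_chiChar_mul' {m : ℕ} (w z : Fin m → Bool) :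
    ∑ T : Finset (Fin m), chiChar T w * chiChar T z = if w = z then (2:ℝ)^m else 0 := by
  have h1 : ∀ T : Finset (Fin m), chiChar T w * chiChar T z
      = (∏ i ∈ T, ((if w i then (-1:ℝ) else 1) * (if z i then (-1:ℝ) else 1)))
        * ∏ _i ∈ (univ \ T), (1:ℝ) := by
    intro T
    rw [chiChar, chiChar, ← Finset.prod_mul_distrib, Finset.prod_const_one, mul_one]
  rw [Finset.sum_congr rfl (fun T _ => h1 T)]
  rw [← Finset.powerset_univ, ← Finset.prod_add]
  by_cases h : w = z
  · subst h
    rw [if_pos rfl]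
    have : ∀ i ∈ (univ : Finset (Fin m)),
        ((if w i then (-1:ℝ) else 1) * (if w i then (-1:ℝ) else 1) + 1) = 2 := by
      intro i _; cases w i <;> norm_num
    rw [Finset.prod_congr rfl this, Finset.prod_const, Finset.card_univ, Fintype.card_fin]
  · rw [if_neg h]
    obtain ⟨i, hi⟩ : ∃ i, w i ≠ z i := by
      by_contra hc; push_neg at hc; exact h (funext hc)
    apply Finset.prod_eq_zero (Finset.mem_univ i)
    cases hw : w i <;> cases hz : z i <;> simp_all

private lemma myFourier' {m : ℕ} (g : (Fin m → Bool) → ℝ) (z : Fin m → Bool) :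
    g z * 2^m = ∑ T : Finset (Fin m), (∑ w, g w * chiChar T w) * chiChar T z := by
  have h : ∑ T : Finset (Fin m), (∑ w, g w * chiChar T w) * chiChar T z
      = ∑ w, g w * ∑ T : Finset (Fin m), chiChar T w * chiChar T z := by
    simp_rw [Finset.sum_mul, Finset.mul_sum]
    rw [Finset.sum_comm]
    apply Finset.sum_congr rfl; intro w _
    apply Finset.sum_congr rfl; intro T _
    ring
  rw [h]
  simp_rw [sum_chiChar_mul']
  simp [mul_ite]

private lemma chiChar_update' {m : ℕ} (T : Finset (Fin m)) (z : Fin m → Bool)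
    (α : Fin m) (hα : α ∈ T) :
    chiChar T (Function.update z α (!(z α))) = - chiChar T z := by
  rw [chiChar, chiChar, ← Finset.mul_prod_erase _ _ hα, ← Finset.mul_prod_erase _ _ hα]
  have h1 : ∀ i ∈ T.erase α,
      (if Function.update z α (!(z α)) i then (-1:ℝ) else 1) = (if z i then -1 else 1) := by
    intro i hi
    rw [Function.update_of_ne (Finset.ne_of_mem_erase hi)]
  rw [Finset.prod_congr rfl h1, Function.update_self]
  cases z α <;> simp

private lemma term_zero' (K ℓ m d : ℕ) (μ f : (Fin m → Bool) → ℝ)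
    (horth : Orthogonal μ d f)
    (S0 S1 : Fin K → Fin m → Fin ℓ)
    (hrd : (∑ i : Fin K, (Finset.univ.filter (fun α : Fin m => S0 i α = S1 i α)).card) < d)
    (p : (Fin K → Bool) → Finset (Fin m)) :
    (∑ x : Fin m → (Fin K → Fin ℓ) → Bool, ∏ u : Fin K → Bool,
      (∑ w, f w * μ w * chiChar (p u) w) *
        chiChar (p u) (mask x (fun i => if u i then S1 i else S0 i))) = 0 := by
  classical
  by_cases hcard : ∀ u : Fin K → Bool, d ≤ (p u).card
  · set u₀ : Fin K → Bool := fun _ => false with hu₀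
    have hB : ¬ (p u₀ ⊆ Finset.univ.biUnion
        (fun i : Fin K => Finset.univ.filter fun α : Fin m => S0 i α = S1 i α)) := by
      intro hsub
      have h1 := Finset.card_le_card hsub
      have h2 := Finset.card_biUnion_le (s := (Finset.univ : Finset (Fin K)))
        (t := fun i => Finset.univ.filter fun α : Fin m => S0 i α = S1 i α)
      have h3 := hcard u₀
      omega
    obtain ⟨α, hαp, hαB⟩ := Finset.not_subset.mp hB
    have hα : ∀ i, S0 i α ≠ S1 i α := by
      intro i hi
      exact hαB (Finset.mem_biUnion.mpr ⟨i, Finset.mem_univ i,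
        Finset.mem_filter.mpr ⟨Finset.mem_univ α, hi⟩⟩)
    set c₀ : Fin K → Fin ℓ := fun i => S0 i α with hc₀
    set flip : (Fin m → (Fin K → Fin ℓ) → Bool) → (Fin m → (Fin K → Fin ℓ) → Bool) :=
      fun x β c => if β = α ∧ c = c₀ then !(x β c) else x β c with hflip
    have hinv : Function.Involutive flip := by
      intro x; funext β c
      simp only [hflip]
      by_cases h : β = α ∧ c = c₀ <;> simp [h]
    have hmask_ne : ∀ (u : Fin K → Bool), u ≠ u₀ → ∀ x,
        mask (flip x) (fun i => if u i then S1 i else S0 i)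
          = mask x (fun i => if u i then S1 i else S0 i) := by
      intro u hu x
      funext β
      simp only [mask, hflip]
      rw [if_neg]
      rintro ⟨rfl, hc⟩
      obtain ⟨i, hi⟩ : ∃ i, u i = true := by
        by_contra hcon; push_neg at hcon
        exact hu (funext fun i => by simpa using hcon i)
      have := congrFun hc i
      rw [if_pos hi] at this
      exact hα i this.symm
    have hmask_u₀ : ∀ x, mask (flip x) (fun i => if u₀ i then S1 i else S0 i)
        = Function.update (mask x (fun i => if u₀ i then S1 i else S0 i)) α
            (!(mask x (fun i => if u₀ i then S1 i else S0 i) α)) := by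
      intro x
      funext β
      have hcell : ∀ β : Fin m, (fun i => if u₀ i then S1 i β else S0 i β) = fun i => S0 i β := by
        intro β; funext i; simp [hu₀]
      by_cases h : β = α
      · subst h
        simp only [mask, hflip, Function.update_self, hcell]
        simp [hc₀]
      · simp only [mask, hflip, Function.update_of_ne h, hcell]
        rw [if_neg]
        rintro ⟨h', _⟩; exact h h'
    have hneg : ∀ x, (∏ u : Fin K → Bool, (∑ w, f w * μ w * chiChar (p u) w) *
          chiChar (p u) (mask (flip x) (fun i => if u i then S1 i else S0 i)))
        = - ∏ u : Fin K → Bool, (∑ w, f w * μ w * chiChar (p u) w) *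
          chiChar (p u) (mask x (fun i => if u i then S1 i else S0 i)) := by
      intro x
      rw [← Finset.mul_prod_erase _ _ (Finset.mem_univ u₀),
          ← Finset.mul_prod_erase _ _ (Finset.mem_univ u₀)]
      have h2 : (∏ u ∈ Finset.univ.erase u₀, (∑ w, f w * μ w * chiChar (p u) w) *
            chiChar (p u) (mask (flip x) (fun i => if u i then S1 i else S0 i)))
          = ∏ u ∈ Finset.univ.erase u₀, (∑ w, f w * μ w * chiChar (p u) w) *
            chiChar (p u) (mask x (fun i => if u i then S1 i else S0 i)) :=
        Finset.prod_congr rfl (fun u hu => by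
          rw [hmask_ne u (Finset.ne_of_mem_erase hu) x])
      rw [h2, hmask_u₀ x, chiChar_update' _ _ _ hαp]
      ring
    have hsum := Equiv.sum_comp (Function.Involutive.toPerm flip hinv)
      (fun x => ∏ u : Fin K → Bool, (∑ w, f w * μ w * chiChar (p u) w) *
        chiChar (p u) (mask x (fun i => if u i then S1 i else S0 i)))
    simp only [Function.Involutive.coe_toPerm] at hsum
    simp only [hneg] at hsum
    rw [Finset.sum_neg_distrib] at hsum
    linarith
  · push_neg at hcard
    obtain ⟨u, hu⟩ := hcard
    have hc : (∑ w, f w * μ w * chiChar (p u) w) = 0 := by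
      rw [← horth (p u) hu]
      exact Finset.sum_congr rfl fun w _ => by ring
    exact Finset.sum_eq_zero fun x _ =>
      Finset.prod_eq_zero (Finset.mem_univ u) (by rw [hc, zero_mul])

end ClaimOneAux

/-- Claim 1: if `f` is `(μ,d)`-orthogonal and `r < d`, where
`r_i = |{α : S^i_0[α] = S^i_1[α]}|` and `r = r_1 + ⋯ + r_{k-1}`, then
`H^f_k(S^1_0,…,S^{k-1}_1) = 0`. -/
theorem statement7 (k ℓ m d : ℕ) (hk : 2 ≤ k) (hℓ : 1 ≤ ℓ) (hm : 1 ≤ m) (hd : 1 ≤ d)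
    (n : ℕ) (hn : n = ℓ ^ (k - 1) * m)
    (μ : (Fin m → Bool) → ℝ) (hμ : IsProbDist μ)
    (f : (Fin m → Bool) → ℝ) (hf : ∀ z, f z = 1 ∨ f z = -1)
    (horth : Orthogonal μ d f)
    (S0 S1 : Fin (k - 1) → Fin m → Fin ℓ)
    (r : ℕ)
    (hr : r = ∑ i : Fin (k - 1),
      (Finset.univ.filter (fun α : Fin m => S0 i α = S1 i α)).card)
    (hrd : r < d) :
    Hfun k ℓ m f μ S0 S1 = 0 := by
  classical
  have hnum : (∑ x : Fin m → (Fin (k - 1) → Fin ℓ) → Bool,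
      ∏ u : Fin (k - 1) → Bool,
        f (mask x (fun i => if u i then S1 i else S0 i)) *
          μ (mask x (fun i => if u i then S1 i else S0 i))) = 0 := by
    have hmain : (∑ x : Fin m → (Fin (k - 1) → Fin ℓ) → Bool,
        ∏ u : Fin (k - 1) → Bool,
          (f (mask x (fun i => if u i then S1 i else S0 i)) *
            μ (mask x (fun i => if u i then S1 i else S0 i)) * (2:ℝ)^m)) = 0 := by
      have h1 : ∀ (x : Fin m → (Fin (k - 1) → Fin ℓ) → Bool) (u : Fin (k - 1) → Bool),
          f (mask x (fun i => if u i then S1 i else S0 i)) *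
            μ (mask x (fun i => if u i then S1 i else S0 i)) * (2:ℝ)^m
          = ∑ T : Finset (Fin m), (∑ w, f w * μ w * chiChar T w) *
              chiChar T (mask x (fun i => if u i then S1 i else S0 i)) := by
        intro x u
        exact myFourier' (fun z => f z * μ z) _
      simp_rw [h1]
      have h2 : ∀ x : Fin m → (Fin (k - 1) → Fin ℓ) → Bool,
          (∏ u : Fin (k - 1) → Bool, ∑ T : Finset (Fin m),
            (∑ w, f w * μ w * chiChar T w) *
              chiChar T (mask x (fun i => if u i then S1 i else S0 i)))
          = ∑ p ∈ Fintype.piFinset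
              (fun _ : Fin (k - 1) → Bool => (Finset.univ : Finset (Finset (Fin m)))),
              ∏ u : Fin (k - 1) → Bool, (∑ w, f w * μ w * chiChar (p u) w) *
                chiChar (p u) (mask x (fun i => if u i then S1 i else S0 i)) :=
        fun x => Finset.prod_univ_sum _ _
      simp_rw [h2]
      rw [Finset.sum_comm]
      refine Finset.sum_eq_zero fun p _ => ?_
      exact term_zero' (k - 1) ℓ m d μ f horth S0 S1 (hr ▸ hrd) p
    have hfac : (∑ x : Fin m → (Fin (k - 1) → Fin ℓ) → Bool,
        ∏ u : Fin (k - 1) → Bool,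
          f (mask x (fun i => if u i then S1 i else S0 i)) *
            μ (mask x (fun i => if u i then S1 i else S0 i)))
        * ((2:ℝ)^m) ^ (Fintype.card (Fin (k - 1) → Bool)) = 0 := by
      have hx : ∀ x : Fin m → (Fin (k - 1) → Fin ℓ) → Bool,
          (∏ u : Fin (k - 1) → Bool,
            (f (mask x (fun i => if u i then S1 i else S0 i)) *
              μ (mask x (fun i => if u i then S1 i else S0 i)) * (2:ℝ)^m))
          = (∏ u : Fin (k - 1) → Bool,
              f (mask x (fun i => if u i then S1 i else S0 i)) *
                μ (mask x (fun i => if u i then S1 i else S0 i)))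
            * ((2:ℝ)^m) ^ (Fintype.card (Fin (k - 1) → Bool)) := by
        intro x
        rw [Finset.prod_mul_distrib, Finset.prod_const, Finset.card_univ]
      rw [Finset.sum_mul, ← hmain]
      exact Finset.sum_congr rfl fun x _ => (hx x).symm
    have h2m : ((2:ℝ)^m) ^ (Fintype.card (Fin (k - 1) → Bool)) ≠ 0 := by positivity
    exact (mul_eq_zero.mp hfac).resolve_right h2m
  rw [Hfun, hnum]
  simp
end

section
/- Let k ≥ 2, ℓ, m ≥ 1 be integers, n = ℓ^{k−1}m, let μ be a probability distribution on {0,1}^m, and let λ be the probability distribution on {0,1}^n × ([ℓ]^m)^{k−1} given by λ(x, S^1,…,S^{k−1}) = μ(x ← S^1,…,S^{k−1})/(ℓ^{m(k−1)} 2^{n−m}). Then for any f, g : {0,1}^m → {−1,1}, Corr_λ(F^f_k, F^g_k) = Corr_μ(f, g). -/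
open scoped BigOperators

private lemma sum_mask_aux {K ℓ m : ℕ} (S : Fin K → Fin m → Fin ℓ)
    (h : (Fin m → Bool) → ℝ) :
    ∑ x : Fin m → (Fin K → Fin ℓ) → Bool, h (fun α => x α (fun i => S i α))
      = 2 ^ (m * (ℓ ^ K - 1)) * ∑ z : Fin m → Bool, h z := by
  classical
  let e : (Fin m → (Fin K → Fin ℓ) → Bool) ≃
      (Fin m → Bool) × (∀ α : Fin m, {q : Fin K → Fin ℓ // q ≠ fun i => S i α} → Bool) :=
  { toFun := fun x => (fun α => x α (fun i => S i α), fun α q => x α q.1)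
    invFun := fun p α q => if hq : q = fun i => S i α then p.1 α else p.2 α ⟨q, hq⟩
    left_inv := by
      intro x; funext α q
      by_cases hq : q = fun i => S i α
      · simp [hq]
      · simp [hq]
    right_inv := by
      intro p
      refine Prod.ext ?_ ?_
      · funext α; simp
      · funext α q; simp [q.2] }
  rw [← Equiv.sum_comp e.symm (fun x => h (fun α => x α (fun i => S i α)))]
  have he : ∀ p : (Fin m → Bool) × (∀ α : Fin m, {q : Fin K → Fin ℓ // q ≠ fun i => S i α} → Bool),
      (fun α => (e.symm p) α (fun i => S i α)) = p.1 := by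
    intro p; funext α; simp [e]
  simp only [he]
  rw [Fintype.sum_prod_type]
  simp only [Finset.sum_const, Finset.card_univ, nsmul_eq_mul]
  rw [← Finset.mul_sum]
  have hcard : Fintype.card (∀ α : Fin m, {q : Fin K → Fin ℓ // q ≠ fun i => S i α} → Bool)
      = 2 ^ (m * (ℓ ^ K - 1)) := by
    simp [Fintype.card_pi, Fintype.card_fun, Fintype.card_subtype_compl, pow_mul,
      Finset.prod_const, ← pow_mul, Nat.mul_comm]
  rw [hcard]
  push_cast
  ring

/-- `Corr_λ(F^f_k, F^g_k) = Corr_μ(f, g)`, where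
`λ(x,S) = μ(x ← S)/(ℓ^{m(k-1)} 2^{n-m})`. -/
theorem statement10 (k ℓ m : ℕ) (hk : 2 ≤ k) (hℓ : 1 ≤ ℓ) (hm : 1 ≤ m)
    (n : ℕ) (hn : n = ℓ ^ (k - 1) * m)
    (μ : (Fin m → Bool) → ℝ) (hμ : IsProbDist μ)
    (f g : (Fin m → Bool) → ℝ)
    (hf : ∀ z, f z = 1 ∨ f z = -1) (hg : ∀ z, g z = 1 ∨ g z = -1) :
    ∑ p : (Fin m → (Fin (k - 1) → Fin ℓ) → Bool) × (Fin (k - 1) → Fin m → Fin ℓ),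
        lamDist k ℓ m n μ p * Ffun f p * Ffun g p =
      ∑ z : Fin m → Bool, μ z * f z * g z := by
    classical
  have hnm : n - m = m * (ℓ ^ (k - 1) - 1) := by
    rw [hn, Nat.mul_sub, Nat.mul_one, Nat.mul_comm]
  simp only [lamDist, Ffun, mask]
  set C : ℝ := (ℓ : ℝ) ^ (m * (k - 1)) * 2 ^ (n - m) with hC
  have hC0 : C ≠ 0 := by
    have : (0:ℝ) < ℓ := by exact_mod_cast hℓ
    positivity
  have key := fun S : Fin (k-1) → Fin m → Fin ℓ =>
    sum_mask_aux S (fun z => μ z * f z * g z)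
  calc ∑ p : (Fin m → (Fin (k - 1) → Fin ℓ) → Bool) × (Fin (k - 1) → Fin m → Fin ℓ),
        μ (fun α => p.1 α (fun i => p.2 i α)) / C
          * f (fun α => p.1 α (fun i => p.2 i α)) * g (fun α => p.1 α (fun i => p.2 i α))
      = (∑ S : Fin (k - 1) → Fin m → Fin ℓ, ∑ x : Fin m → (Fin (k - 1) → Fin ℓ) → Bool,
          (fun z => μ z * f z * g z) (fun α => x α (fun i => S i α))) / C := by
        rw [Fintype.sum_prod_type, Finset.sum_comm, Finset.sum_div]
        congr 1; funext S
        rw [Finset.sum_div]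
        congr 1; funext x
        ring
    _ = (∑ S : Fin (k - 1) → Fin m → Fin ℓ,
          (2:ℝ) ^ (m * (ℓ ^ (k-1) - 1)) * ∑ z : Fin m → Bool, μ z * f z * g z) / C := by
        simp only [key]
    _ = ∑ z : Fin m → Bool, μ z * f z * g z := by
        rw [Finset.sum_const, Finset.card_univ, nsmul_eq_mul]
        have hcard : (Fintype.card (Fin (k-1) → Fin m → Fin ℓ) : ℝ) = (ℓ:ℝ) ^ (m * (k-1)) := by
          simp [Fintype.card_fun, ← pow_mul, Nat.mul_comm]
        rw [hcard, hC, hnm]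
        field_simp
end

section
/- Let k ≥ 2, ℓ, m ≥ 1 be integers, n = ℓ^{k−1}m, f : {0,1}^m → {−1,1}, μ a probability distribution on {0,1}^m, and fix S^1_0, S^1_1, …, S^{k−1}_0, S^{k−1}_1 ∈ [ℓ]^m. Define G : {0,1}^m → ℝ by G(z) = E[ ∏_{u∈{0,1}^{k−1}, u≠0^{k−1}} f(x ← S^1_{u_1},…,S^{k−1}_{u_{k−1}}) · μ(x ← S^1_{u_1},…,S^{k−1}_{u_{k−1}}) ], where the expectation is over x drawn uniformly from {0,1}^n conditioned on x ← S^1_0,…,S^{k−1}_0 = z. Let T = {α ∈ [m] : S^i_0[α] = S^i_1[α] for some i ∈ [k−1]}. Then G(z) = G(z') whenever z and z' agree on all coordinates in T; moreover |T| ≤ r, where r = Σ_{i=1}^{k−1} |{α ∈ [m] : S^i_0[α] = S^i_1[α]}|. In particular, G depends on at most r of the m input coordinates. -/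
open scoped BigOperators

/-- `G(z)`: the expectation, over `x` drawn uniformly from `{0,1}^n` conditioned on
`x ← S^1_0,…,S^{k-1}_0 = z`, of
`∏_{u ∈ {0,1}^{k-1}, u ≠ 0^{k-1}} f(x ← S^1_{u_1},…,S^{k-1}_{u_{k-1}}) μ(x ← S^1_{u_1},…,S^{k-1}_{u_{k-1}})`. -/
noncomputable def Gcond (k ℓ m : ℕ) (f μ : (Fin m → Bool) → ℝ)
    (S0 S1 : Fin (k - 1) → Fin m → Fin ℓ) (z : Fin m → Bool) : ℝ :=
  (∑ x ∈ Finset.univ.filter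
      (fun x : Fin m → (Fin (k - 1) → Fin ℓ) → Bool => mask x S0 = z),
    ∏ u ∈ Finset.univ.filter
      (fun u : Fin (k - 1) → Bool => u ≠ fun _ => false),
      f (mask x (fun i => if u i then S1 i else S0 i)) *
        μ (mask x (fun i => if u i then S1 i else S0 i))) /
  ((Finset.univ.filter
      (fun x : Fin m → (Fin (k - 1) → Fin ℓ) → Bool => mask x S0 = z)).card : ℝ)

/-- With `T = {α : S^i_0[α] = S^i_1[α] for some i}`, the conditional expectation `G`
satisfies `G(z) = G(z')` whenever `z, z'` agree on `T`; moreover `|T| ≤ r`, where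
`r = Σ_i |{α : S^i_0[α] = S^i_1[α]}|`. In particular `G` depends on at most `r` of its
`m` input coordinates. -/
theorem statement15 (k ℓ m : ℕ) (hk : 2 ≤ k) (hℓ : 1 ≤ ℓ) (hm : 1 ≤ m)
    (n : ℕ) (hn : n = ℓ ^ (k - 1) * m)
    (f : (Fin m → Bool) → ℝ) (hf : ∀ z, f z = 1 ∨ f z = -1)
    (μ : (Fin m → Bool) → ℝ) (hμ : IsProbDist μ)
    (S0 S1 : Fin (k - 1) → Fin m → Fin ℓ)
    (T : Finset (Fin m))
    (hT : T = Finset.univ.filter (fun α : Fin m => ∃ i, S0 i α = S1 i α))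
    (r : ℕ)
    (hr : r = ∑ i : Fin (k - 1),
      (Finset.univ.filter (fun α : Fin m => S0 i α = S1 i α)).card) :
    (∀ z z' : Fin m → Bool, (∀ α ∈ T, z α = z' α) →
        Gcond k ℓ m f μ S0 S1 z = Gcond k ℓ m f μ S0 S1 z') ∧
    T.card ≤ r := by
  constructor
  · intro z z' hzz'
    -- the re-writing map
    set g : (Fin m → Bool) → (Fin m → (Fin (k - 1) → Fin ℓ) → Bool) →
        (Fin m → (Fin (k - 1) → Fin ℓ) → Bool) :=
      fun w x α v => if α ∉ T ∧ v = (fun i => S0 i α) then w α else x α v with hg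
    have hmem : ∀ (w w' : Fin m → Bool), (∀ α ∈ T, w α = w' α) →
        ∀ x, mask x S0 = w → mask (g w' x) S0 = w' := by
      intro w w' hww' x hx
      funext α
      by_cases hα : α ∈ T
      · simp only [mask, hg, hα, not_true_eq_false, false_and, if_false]
        have := congrFun hx α
        simp only [mask] at this
        rw [this, hww' α hα]
      · simp [mask, hg, hα]
    have hinv : ∀ (w w' : Fin m → Bool), ∀ x, mask x S0 = w → g w (g w' x) = x := by
      intro w w' x hx
      funext α v
      by_cases h : α ∉ T ∧ v = (fun i => S0 i α)
      · obtain ⟨h1, h2⟩ := h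
        have hx' := congrFun hx α
        simp only [mask] at hx'
        simp only [hg, if_pos (show α ∉ T ∧ v = (fun i => S0 i α) from ⟨h1, h2⟩)]
        rw [h2, hx']
      · simp only [hg, h, if_false]
    have hprod : ∀ (w' : Fin m → Bool) x (u : Fin (k - 1) → Bool),
        u ≠ (fun _ => false) →
        mask (g w' x) (fun i => if u i then S1 i else S0 i)
          = mask x (fun i => if u i then S1 i else S0 i) := by
      intro w' x u hu
      funext α
      simp only [mask, hg]
      by_cases hα : α ∈ T
      · simp [hα]
      · have hne : (fun i => if u i then S1 i α else S0 i α) ≠ (fun i => S0 i α) := by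
          intro heq
          obtain ⟨i, hi⟩ : ∃ i, u i = true := by
            by_contra hc
            push_neg at hc
            exact hu (funext fun i => by simpa using hc i)
          have := congrFun heq i
          simp only [hi, if_true] at this
          rw [hT] at hα
          exact hα (Finset.mem_filter.mpr ⟨Finset.mem_univ α, ⟨i, this.symm⟩⟩)
        have hne' : ¬ (α ∉ T ∧ (fun i => (if u i = true then S1 i else S0 i) α)
            = fun i => S0 i α) := by
          rintro ⟨-, heq⟩
          exact hne (funext fun i => by
            rw [← apply_ite (fun F => F α) (u i = true) (S1 i) (S0 i)]
            exact congrFun heq i)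
        rw [if_neg hne']
    unfold Gcond
    have hcard : (Finset.univ.filter
        (fun x : Fin m → (Fin (k - 1) → Fin ℓ) → Bool => mask x S0 = z)).card
        = (Finset.univ.filter
        (fun x : Fin m → (Fin (k - 1) → Fin ℓ) → Bool => mask x S0 = z')).card := by
      apply Finset.card_bij' (fun x _ => g z' x) (fun x _ => g z x)
      · intro x hx
        simp only [Finset.mem_filter, Finset.mem_univ, true_and] at hx ⊢
        exact hmem z z' hzz' x hx
      · intro x hx
        simp only [Finset.mem_filter, Finset.mem_univ, true_and] at hx ⊢
        exact hmem z' z (fun α hα => (hzz' α hα).symm) x hx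
      · intro x hx
        simp only [Finset.mem_filter, Finset.mem_univ, true_and] at hx
        exact hinv z z' x hx
      · intro x hx
        simp only [Finset.mem_filter, Finset.mem_univ, true_and] at hx
        exact hinv z' z x hx
    have hsum : (∑ x ∈ Finset.univ.filter
        (fun x : Fin m → (Fin (k - 1) → Fin ℓ) → Bool => mask x S0 = z),
        ∏ u ∈ Finset.univ.filter (fun u : Fin (k - 1) → Bool => u ≠ fun _ => false),
          f (mask x (fun i => if u i then S1 i else S0 i)) *
            μ (mask x (fun i => if u i then S1 i else S0 i)))
        = (∑ x ∈ Finset.univ.filter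
        (fun x : Fin m → (Fin (k - 1) → Fin ℓ) → Bool => mask x S0 = z'),
        ∏ u ∈ Finset.univ.filter (fun u : Fin (k - 1) → Bool => u ≠ fun _ => false),
          f (mask x (fun i => if u i then S1 i else S0 i)) *
            μ (mask x (fun i => if u i then S1 i else S0 i))) := by
      apply Finset.sum_bij' (fun x _ => g z' x) (fun x _ => g z x)
      · intro x hx
        simp only [Finset.mem_filter, Finset.mem_univ, true_and] at hx ⊢
        exact hmem z z' hzz' x hx
      · intro x hx
        simp only [Finset.mem_filter, Finset.mem_univ, true_and] at hx ⊢
        exact hmem z' z (fun α hα => (hzz' α hα).symm) x hx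
      · intro x hx
        simp only [Finset.mem_filter, Finset.mem_univ, true_and] at hx
        exact hinv z z' x hx
      · intro x hx
        simp only [Finset.mem_filter, Finset.mem_univ, true_and] at hx
        exact hinv z' z x hx
      · intro x hx
        apply Finset.prod_congr rfl
        intro u hu
        simp only [Finset.mem_filter, Finset.mem_univ, true_and] at hu
        rw [hprod z' x u hu]
    rw [hsum, hcard]
  · rw [hT, hr]
    calc (Finset.univ.filter (fun α : Fin m => ∃ i, S0 i α = S1 i α)).card
        ≤ (Finset.univ.biUnion (fun i : Fin (k - 1) =>
            Finset.univ.filter (fun α : Fin m => S0 i α = S1 i α))).card := by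
          apply Finset.card_le_card
          intro α hα
          simp only [Finset.mem_filter, Finset.mem_univ, true_and] at hα
          obtain ⟨i, hi⟩ := hα
          exact Finset.mem_biUnion.mpr ⟨i, Finset.mem_univ i,
            Finset.mem_filter.mpr ⟨Finset.mem_univ α, hi⟩⟩
      _ ≤ _ := Finset.card_biUnion_le
end
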